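/- Let t ≥ 3 be an odd integer. For every integer m with t − 1 ≤ m ≤ (t² − 1)/4, there exists a partition λ of m which is not equal to its conjugate partition and such that the number of rows of λ plus the number of columns of λ equals t. -/

import Mathlib

lemma card_cellsOfRowLens (w : List ℕ) :
    (YoungDiagram.cellsOfRowLens w).card = w.sum := by
  induction w with
  | nil => simp [YoungDiagram.cellsOfRowLens]
  | cons a l ih =>
    rw [YoungDiagram.cellsOfRowLens, Finset.card_union_of_disjoint, Finset.card_map, ih,
      Finset.card_product]
    · simp [Nat.add_comm]
    · rw [Finset.disjoint_left]
      rintro ⟨i, j⟩ h1 h2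
      simp only [Finset.mem_product, Finset.mem_singleton, Finset.mem_range] at h1
      simp only [Finset.mem_map, Function.Embedding.coe_prodMap, Prod.exists,
        Prod.map_apply, Prod.mk.injEq] at h2
      obtain ⟨x, y, _, hx, hy⟩ := h2
      simp only [Function.Embedding.coeFn_mk] at hx
      omega

lemma minsum (d k : ℕ) : ∀ n, ∑ i ∈ Finset.range n, min d (k - i * d) = min k (n * d) := by
  intro n
  induction n with
  | zero => simp
  | succ n ih =>
    rw [Finset.sum_range_succ, ih, Nat.succ_mul]
    omega

/-- For every odd `t ≥ 3` and every `m` with `t - 1 ≤ m ≤ (t² - 1)/4` there is a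
non-self-conjugate partition of `m` (encoded as a Young diagram with `m` cells)
whose number of rows plus number of columns equals `t`. -/
theorem stmt19 (t : ℕ) (ht3 : 3 ≤ t) (htodd : Odd t) :
    ∀ m : ℕ, t - 1 ≤ m → m ≤ (t ^ 2 - 1) / 4 →
      ∃ μ : YoungDiagram, μ.card = m ∧ μ.transpose ≠ μ ∧
        μ.colLen 0 + μ.rowLen 0 = t := by
  obtain ⟨s, rfl⟩ := htodd
  intro m hm1 hm2
  have hs : 1 ≤ s := by omega
  have hsq : (2 * s + 1) ^ 2 - 1 = 4 * (s * s + s) := by ring_nf; omega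
  rw [hsq] at hm2
  have hm2' : m ≤ s * s + s := by omega
  set k := m - 2 * s with hk
  have hk2 : k ≤ (s - 1) * s := by
    have : (s - 1) * s = s * s - s := Nat.sub_one_mul s s
    omega
  -- row lengths
  set w : List ℕ := (s + 1) :: List.ofFn (fun i : Fin (s - 1) => 1 + min s (k - i * s)) with hw
  have hwlen : w.length = s := by rw [hw]; simp; omega
  have hwpos : ∀ x ∈ w, 0 < x := by
    intro x hx
    simp only [hw, List.mem_cons, List.mem_ofFn] at hx
    rcases hx with rfl | ⟨i, rfl⟩
    · omega
    · show 0 < 1 + min s (k - (i : ℕ) * s); omega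
  have hsorted : w.SortedGE := by
    rw [List.sortedGE_iff_pairwise, hw, List.pairwise_cons]
    constructor
    · intro b hb
      simp only [List.mem_ofFn] at hb
      obtain ⟨i, rfl⟩ := hb
      show 1 + min s (k - (i : ℕ) * s) ≤ s + 1
      omega
    · rw [List.pairwise_ofFn]
      intro i j hij
      have : k - (j : ℕ) * s ≤ k - (i : ℕ) * s :=
        Nat.sub_le_sub_left (Nat.mul_le_mul_right _ (le_of_lt hij)) k
      omega
  refine ⟨YoungDiagram.ofRowLens w hsorted, ?_, ?_, ?_⟩
  · show (YoungDiagram.cellsOfRowLens w).card = m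
    rw [card_cellsOfRowLens, hw]
    rw [List.sum_cons, List.sum_ofFn]
    rw [Fin.sum_univ_eq_sum_range (fun i => 1 + min s (k - i * s))]
    rw [Finset.sum_add_distrib, Finset.sum_const, minsum]
    simp only [Finset.card_range, smul_eq_mul, mul_one]
    omega
  · intro h
    have h1 : (YoungDiagram.ofRowLens w hsorted).rowLen 0 = s + 1 := by
      have := YoungDiagram.rowLen_ofRowLens (w := w) (hw := hsorted) ⟨0, by omega⟩
      simpa [hw] using this
    have h2 : (YoungDiagram.ofRowLens w hsorted).colLen 0 = s := by
      rw [← YoungDiagram.length_rowLens, YoungDiagram.rowLens_length_ofRowLens hwpos, hwlen]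
    have h3 := YoungDiagram.rowLen_transpose (YoungDiagram.ofRowLens w hsorted) 0
    rw [h] at h3
    omega
  · have h1 : (YoungDiagram.ofRowLens w hsorted).rowLen 0 = s + 1 := by
      have := YoungDiagram.rowLen_ofRowLens (w := w) (hw := hsorted) ⟨0, by omega⟩
      simpa [hw] using this
    have h2 : (YoungDiagram.ofRowLens w hsorted).colLen 0 = s := by
      rw [← YoungDiagram.length_rowLens, YoungDiagram.rowLens_length_ofRowLens hwpos, hwlen]
    omega
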